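/- For the simple module S_i of a finite-dimensional algebra Λ, the torsion class G(S_i) = ^⊥(S_i^⊥) consists exactly of modules all of whose composition factors are isomorphic to S_i (iterated self-extensions of S_i). -/

import Mathlib

variable (Λ : Type) [Ring Λ]

/-- The torsion class `G(M) = ^⊥(M^⊥)` generated by `M` inside the category
of finite-length `Λ`-modules. -/
def torsionClassOf (M : ModuleCat.{0} Λ) : Set (ModuleCat.{0} Λ) :=
  {N | ∀ P : ModuleCat.{0} Λ, IsFiniteLength Λ P →
    (∀ f : M ⟶ P, f = 0) → ∀ g : N ⟶ P, g = 0}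

/-- `N` is an iterated self-extension of `S`: every simple subquotient
(composition factor) of `N` is isomorphic to `S`. -/
def AllFactorsIso (S N : ModuleCat.{0} Λ) : Prop :=
  ∀ (B : Submodule Λ N) (A : Submodule Λ B),
    IsSimpleModule Λ (B ⧸ A) → Nonempty ((B ⧸ A) ≃ₗ[Λ] S)

section AuxAllS

variable {Λ}

/-- Auxiliary predicate: every simple quotient of a submodule of `M` is isomorphic to `S`. -/
def AllS (S : Type) [AddCommGroup S] [Module Λ S] (M : Type) [AddCommGroup M] [Module Λ M] :
    Prop :=
  ∀ (W : Submodule Λ M) (T : Type) [AddCommGroup T] [Module Λ T],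
    IsSimpleModule Λ T → ∀ f : ↥W →ₗ[Λ] T, Function.Surjective f → Nonempty (T ≃ₗ[Λ] S)

theorem AllS.congr {S M M' : Type} [AddCommGroup S] [Module Λ S] [AddCommGroup M] [Module Λ M]
    [AddCommGroup M'] [Module Λ M'] (h : AllS (Λ := Λ) S M) (e : M ≃ₗ[Λ] M') :
    AllS (Λ := Λ) S M' := by
  intro W T _ _ hT f hf
  refine h (W.map (e.symm : M' →ₗ[Λ] M)) T hT
    (f ∘ₗ ((e.symm.submoduleMap W).symm : _ →ₗ[Λ] _)) ?_
  exact hf.comp (e.symm.submoduleMap W).symm.surjective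

theorem allS_of_subsingleton {S M : Type} [AddCommGroup S] [Module Λ S] [AddCommGroup M]
    [Module Λ M] [Subsingleton M] : AllS (Λ := Λ) S M := by
  intro W T _ _ hT f hf
  have : Nontrivial T := IsSimpleModule.nontrivial Λ T
  have : Subsingleton ↥W := ⟨fun a b => Subtype.ext (Subsingleton.elim _ _)⟩
  exact absurd hf.subsingleton (not_subsingleton T)

theorem allS_self {S : Type} [AddCommGroup S] [Module Λ S] (hS : IsSimpleModule Λ S) :
    AllS (Λ := Λ) S S := by
  intro W T _ _ hT f hf
  have hTn : Nontrivial T := IsSimpleModule.nontrivial Λ T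
  rcases eq_bot_or_eq_top W with rfl | rfl
  · have : Subsingleton ↥(⊥ : Submodule Λ S) := inferInstance
    exact absurd hf.subsingleton (not_subsingleton T)
  · set f' : S →ₗ[Λ] T := f ∘ₗ ((Submodule.topEquiv (R := Λ) (M := S)).symm : S →ₗ[Λ] _)
      with hf'def
    have hf' : Function.Surjective f' :=
      hf.comp (Submodule.topEquiv (R := Λ) (M := S)).symm.surjective
    rcases eq_bot_or_eq_top (LinearMap.ker f') with hk | hk
    · exact ⟨(LinearEquiv.ofBijective f' ⟨LinearMap.ker_eq_bot.1 hk, hf'⟩).symm⟩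
    · exfalso
      have h0 : f' = 0 := LinearMap.ker_eq_top.1 hk
      obtain ⟨x, y, hxy⟩ := exists_pair_ne T
      obtain ⟨a, ha⟩ := hf' x
      obtain ⟨b, hb⟩ := hf' y
      rw [h0] at ha hb
      exact hxy (ha.symm.trans hb)

theorem allS_of_extension {S M : Type} [AddCommGroup S] [Module Λ S] [AddCommGroup M]
    [Module Λ M] (A : Submodule Λ M) (hA : AllS (Λ := Λ) S ↥A)
    (hQ : AllS (Λ := Λ) S (M ⧸ A)) : AllS (Λ := Λ) S M := by
  intro W T _ _ hT f hf
  set K : Submodule Λ ↥W := Submodule.comap W.subtype A with hKdef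
  rcases eq_bot_or_eq_top (LinearMap.range (f ∘ₗ K.subtype)) with hr | hr
  · -- f kills W ∩ A, so f factors through a submodule of M ⧸ A
    have hKker : K ≤ LinearMap.ker f := by
      intro x hx
      have hmem : f x ∈ LinearMap.range (f ∘ₗ K.subtype) :=
        ⟨⟨x, hx⟩, rfl⟩
      rw [hr] at hmem
      exact hmem
    set p : ↥W →ₗ[Λ] M ⧸ A := A.mkQ ∘ₗ W.subtype with hpdef
    have hkerp : LinearMap.ker p = K := by
      ext x
      simp only [hpdef, hKdef, LinearMap.mem_ker, LinearMap.comp_apply, Submodule.mkQ_apply,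
        Submodule.mem_comap, Submodule.subtype_apply]
      exact Submodule.Quotient.mk_eq_zero A
    set f' : (↥W ⧸ LinearMap.ker p) →ₗ[Λ] T :=
      (LinearMap.ker p).liftQ f (hkerp ▸ hKker) with hf'def
    have hf' : Function.Surjective f' := by
      intro t
      obtain ⟨w, hw⟩ := hf t
      exact ⟨Submodule.Quotient.mk w, hw⟩
    exact hQ (LinearMap.range p) T hT (f' ∘ₗ (p.quotKerEquivRange.symm : _ →ₗ[Λ] _))
      (hf'.comp p.quotKerEquivRange.symm.surjective)
  · -- f restricted to W ∩ A is already surjective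
    set A' : Submodule Λ ↥A := Submodule.comap A.subtype W with hA'def
    set h : ↥A' →ₗ[Λ] ↥W :=
      LinearMap.codRestrict W (A.subtype ∘ₗ A'.subtype) (fun x => x.2) with hhdef
    refine hA A' T hT (f ∘ₗ h) ?_
    intro t
    have hmem : t ∈ LinearMap.range (f ∘ₗ K.subtype) := by rw [hr]; trivial
    obtain ⟨k, hk⟩ := hmem
    refine ⟨⟨⟨(k : ↥W), k.2⟩, (k : ↥W).2⟩, ?_⟩
    have : h ⟨⟨(k : ↥W), k.2⟩, (k : ↥W).2⟩ = (k : ↥W) := Subtype.ext rfl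
    rw [LinearMap.comp_apply, this]
    exact hk

theorem allFactorsIso_iff_allS (S N : ModuleCat.{0} Λ) :
    AllFactorsIso Λ S N ↔ AllS (Λ := Λ) ↥S ↥N := by
  constructor
  · intro h W T _ _ hT f hf
    have e : (↥W ⧸ LinearMap.ker f) ≃ₗ[Λ] T := f.quotKerEquivOfSurjective hf
    have hsimple : IsSimpleModule Λ (↥W ⧸ LinearMap.ker f) := IsSimpleModule.congr e
    obtain ⟨g⟩ := h W (LinearMap.ker f) hsimple
    exact ⟨e.symm.trans g⟩
  · intro h B A hA
    exact h B (↥B ⧸ A) hA A.mkQ (Submodule.mkQ_surjective A)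

end AuxAllS

/-- For a simple module `S` over a finite-dimensional algebra `Λ`,
the torsion class `G(S) = ^⊥(S^⊥)` consists exactly of the (finite-length)
modules all of whose composition factors are isomorphic to `S`,
i.e. the iterated self-extensions of `S`. -/
theorem stmt_7 (K : Type) [Field K] [Algebra K Λ] [FiniteDimensional K Λ]
    (S : ModuleCat.{0} Λ) (hS : IsSimpleModule Λ S)
    (N : ModuleCat.{0} Λ) (hN : IsFiniteLength Λ N) :
    N ∈ torsionClassOf Λ S ↔ AllFactorsIso Λ S N := by
  have hNboth := (isFiniteLength_iff_isNoetherian_isArtinian (R := Λ) (M := ↥N)).1 hN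
  have hNnoe : IsNoetherian Λ ↥N := hNboth.1
  have hNart : IsArtinian Λ ↥N := hNboth.2
  rw [allFactorsIso_iff_allS]
  constructor
  · intro hTor
    obtain ⟨t, ht, hmax⟩ := (set_has_maximal_iff_noetherian.2 hNnoe)
      {X : Submodule Λ ↥N | AllS (Λ := Λ) ↥S ↥X} ⟨⊥, allS_of_subsingleton⟩
    have ht' : AllS (Λ := Λ) ↥S ↥t := ht
    -- Step 1: no nonzero map S → N ⧸ t
    have hHom : ∀ f : ↥S →ₗ[Λ] (↥N ⧸ t), f = 0 := by
      intro f
      by_contra hf0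
      have hinj : Function.Injective f := by
        rcases eq_bot_or_eq_top (LinearMap.ker f) with hk | hk
        · exact LinearMap.ker_eq_bot.1 hk
        · exact absurd (LinearMap.ker_eq_top.1 hk) hf0
      set X : Submodule Λ ↥N := Submodule.comap t.mkQ (LinearMap.range f) with hXdef
      have htX : t ≤ X := by
        intro x hx
        show t.mkQ x ∈ LinearMap.range f
        have h0 : t.mkQ x = 0 := (Submodule.Quotient.mk_eq_zero t).2 hx
        rw [h0]
        exact zero_mem _
      set A' : Submodule Λ ↥X := Submodule.comap X.subtype t with hA'def
      have hA' : AllS (Λ := Λ) ↥S ↥A' :=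
        ht'.congr (Submodule.comapSubtypeEquivOfLe htX).symm
      set p : ↥X →ₗ[Λ] ↥N ⧸ t := t.mkQ ∘ₗ X.subtype with hpdef
      have hkerp : LinearMap.ker p = A' := by
        ext x
        simp only [hpdef, hA'def, LinearMap.mem_ker, LinearMap.comp_apply, Submodule.mkQ_apply,
          Submodule.mem_comap, Submodule.subtype_apply]
        exact Submodule.Quotient.mk_eq_zero t
      have hrange : LinearMap.range p = LinearMap.range f := by
        rw [hpdef, LinearMap.range_comp, Submodule.range_subtype, hXdef,
          Submodule.map_comap_eq, Submodule.range_mkQ, top_inf_eq]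
      have e : ↥S ≃ₗ[Λ] (↥X ⧸ LinearMap.ker p) :=
        (LinearEquiv.ofInjective f hinj).trans
          ((LinearEquiv.ofEq _ _ hrange.symm).trans p.quotKerEquivRange.symm)
      have hQ : AllS (Λ := Λ) ↥S (↥X ⧸ LinearMap.ker p) := (allS_self hS).congr e
      rw [hkerp] at hQ
      have hXin : AllS (Λ := Λ) ↥S ↥X := allS_of_extension A' hA' hQ
      -- X is strictly bigger than t
      obtain ⟨s, hs⟩ : ∃ s, f s ≠ 0 := by
        by_contra hcon
        push_neg at hcon
        exact hf0 (LinearMap.ext hcon)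
      obtain ⟨n, hn⟩ := Submodule.mkQ_surjective t (f s)
      have hnX : n ∈ X := by
        show t.mkQ n ∈ LinearMap.range f
        rw [hn]
        exact LinearMap.mem_range_self f s
      have hnt : n ∉ t := by
        intro hmem
        apply hs
        rw [← hn]
        exact (Submodule.Quotient.mk_eq_zero t).2 hmem
      exact hmax X hXin (lt_of_le_of_ne htX (fun hEq => hnt (by rw [hEq]; exact hnX)))
    -- Step 2: conclude t = ⊤ using the torsion property
    have hflQ : IsFiniteLength Λ (↥N ⧸ t) := by
      rw [isFiniteLength_iff_isNoetherian_isArtinian]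
      exact ⟨inferInstance, inferInstance⟩
    have h0 : (show N ⟶ ModuleCat.of Λ (↥N ⧸ t) from ModuleCat.ofHom t.mkQ) = 0 :=
      hTor (ModuleCat.of Λ (↥N ⧸ t)) hflQ
        (fun f => ModuleCat.hom_ext (hHom f.hom)) (ModuleCat.ofHom t.mkQ)
    have h0' : (t.mkQ : ↥N →ₗ[Λ] ↥N ⧸ t) = 0 := (congrArg ModuleCat.Hom.hom h0).trans ModuleCat.hom_zero
    have ht_top : t = ⊤ := by
      rw [eq_top_iff]
      intro x _
      have : t.mkQ x = 0 := by rw [h0']; rfl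
      exact (Submodule.Quotient.mk_eq_zero t).1 this
    rw [ht_top] at ht'
    exact ht'.congr Submodule.topEquiv
  · intro h P hPfl hP g
    have hPart : IsArtinian Λ ↥P :=
      ((isFiniteLength_iff_isNoetherian_isArtinian (R := Λ) (M := ↥P)).1 hPfl).2
    by_contra hg
    have hg' : g.hom ≠ 0 := fun h' => hg (ModuleCat.hom_ext (h'.trans ModuleCat.hom_zero.symm))
    have hr : LinearMap.range g.hom ≠ ⊥ :=
      fun h' => hg' (LinearMap.range_eq_bot.1 h')
    rcases eq_bot_or_exists_atom_le (LinearMap.range g.hom) with h' | ⟨a, ha, hale⟩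
    · exact hr h'
    have hsa : IsSimpleModule Λ ↥a := isSimpleModule_iff_isAtom.2 ha
    set W : Submodule Λ ↥N := Submodule.comap g.hom a with hWdef
    set q : ↥W →ₗ[Λ] ↥a :=
      LinearMap.codRestrict a (g.hom ∘ₗ W.subtype) (fun x => x.2) with hqdef
    have hq : Function.Surjective q := by
      rintro ⟨y, hy⟩
      obtain ⟨x, hx⟩ := hale hy
      exact ⟨⟨x, show g.hom x ∈ a from hx ▸ hy⟩, Subtype.ext hx⟩
    obtain ⟨e⟩ := h W ↥a hsa q hq
    set f : ↥S →ₗ[Λ] ↥P := a.subtype ∘ₗ (e.symm : ↥S →ₗ[Λ] ↥a) with hfdef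
    have hf0 : f = 0 := (congrArg ModuleCat.Hom.hom (hP (ModuleCat.ofHom f))).trans ModuleCat.hom_zero
    have : Nontrivial ↥a := IsSimpleModule.nontrivial Λ ↥a
    obtain ⟨y, hy⟩ := exists_ne (0 : ↥a)
    have hval : f (e y) = (y : ↥P) := by
      simp [hfdef, e.symm_apply_apply]
    rw [hf0] at hval
    exact hy (Submodule.coe_eq_zero.1 hval.symm)
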